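/- arXiv:1801.09049 — 2 statements merged into one kernel-verified Lean document; each statement's English description precedes it below -/
import Mathlib

section
/- Let X^(1) and X^(2) be wide-sense stationary discrete-time processes with means μ₁, μ₂ and autocovariance functions γ₁, γ₂ satisfying ∑_{h=0}^∞ |γ_j(h)| < ∞ for j = 1, 2. With the weights w_j = 1/(j(j+1)), the covariance-based dissimilarity measure d*(X^(1), X^(2)) := ∑_{m,l=1}^∞ w_m w_l (√m·|μ₁ − μ₂| + ‖Γ₁(m) − Γ₂(m)‖_F) is finite, i.e. the double series converges. -/
open MeasureTheory Real

/-- The weights `w j = 1/(j(j+1))`. -/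
noncomputable def weight (j : ℕ) : ℝ := 1 / (j * (j + 1))

/-- The `m × m` Toeplitz covariance matrix `Γ(m)` of a wide-sense stationary
process with autocovariance function `γ`: `(Γ(m))_{ab} = γ(|a − b|)`. -/
noncomputable def toeplitzCov (γ : ℕ → ℝ) (m : ℕ) : Matrix (Fin m) (Fin m) ℝ :=
  fun a b => γ (((a : ℤ) - (b : ℤ)).natAbs)

/-- The Frobenius norm `‖M‖_F = √(∑_{a,b} M_{ab}²)`. -/
noncomputable def frobNorm {m : ℕ} (M : Matrix (Fin m) (Fin m) ℝ) : ℝ :=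
  Real.sqrt (∑ a : Fin m, ∑ b : Fin m, M a b ^ 2)

/-- The `(m, l)` summand of the covariance-based dissimilarity measure
`d*`: `w_m · w_l · (√m · |μ₁ − μ₂| + ‖Γ₁(m) − Γ₂(m)‖_F)`. -/
noncomputable def dstarTerm (μ₁ μ₂ : ℝ) (γ₁ γ₂ : ℕ → ℝ) (m l : ℕ) : ℝ :=
  weight m * weight l *
    (Real.sqrt m * |μ₁ - μ₂| + frobNorm (toeplitzCov γ₁ m - toeplitzCov γ₂ m))

private lemma weight_nonneg (j : ℕ) : 0 ≤ weight j := by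
  unfold weight; positivity

private lemma inner_sum_le (f : ℕ → ℝ) (hf : ∀ h, 0 ≤ f h) {m : ℕ} (a : Fin m) :
    ∑ b : Fin m, f (((a:ℤ) - (b:ℤ)).natAbs) ≤ 2 * ∑ h ∈ Finset.range m, f h := by
  classical
  have key : ∀ s : Finset (Fin m),
      (∀ x ∈ s, ∀ y ∈ s, (((a:ℤ) - (x:ℤ)).natAbs) = (((a:ℤ) - (y:ℤ)).natAbs) → x = y) →
      ∑ b ∈ s, f (((a:ℤ) - (b:ℤ)).natAbs) ≤ ∑ h ∈ Finset.range m, f h := by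
    intro s hinj
    rw [← Finset.sum_image hinj]
    apply Finset.sum_le_sum_of_subset_of_nonneg
    · intro h hh
      simp only [Finset.mem_image] at hh
      obtain ⟨b, _, rfl⟩ := hh
      have := a.isLt; have := b.isLt
      simp only [Finset.mem_range]
      omega
    · intro _ _ _; exact hf _
  rw [← Finset.sum_filter_add_sum_filter_not Finset.univ (fun b : Fin m => (b:ℕ) ≤ (a:ℕ)),
    two_mul]
  gcongr
  · apply key
    intro x hx y hy hxy
    simp only [Finset.mem_filter] at hx hy
    have hx' := hx.2; have hy' := hy.2
    ext
    omega
  · apply key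
    intro x hx y hy hxy
    simp only [Finset.mem_filter] at hx hy
    have hx' := hx.2; have hy' := hy.2
    ext
    omega

private lemma psi_summable :
    Summable (fun m : ℕ => weight (m + 1) * Real.sqrt ((m + 1 : ℕ))) := by
  have hb : Summable (fun m : ℕ => (((m + 1 : ℕ)) : ℝ) ^ (-(3/2 : ℝ))) :=
    (summable_nat_add_iff (f := fun n : ℕ => (n : ℝ) ^ (-(3/2 : ℝ))) 1).mpr
      ((Real.summable_nat_rpow (p := -(3/2 : ℝ))).mpr (by norm_num))
  apply Summable.of_nonneg_of_le _ _ hb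
  · intro m
    exact mul_nonneg (weight_nonneg _) (Real.sqrt_nonneg _)
  · intro m
    set x : ℝ := ((m + 1 : ℕ) : ℝ) with hxdef
    have hx0 : (0:ℝ) < x := by
      rw [hxdef]; exact_mod_cast Nat.succ_pos m
    have hrw : x ^ (-(3/2 : ℝ)) = 1 / (x * Real.sqrt x) := by
      rw [Real.rpow_neg hx0.le,
        show (3/2 : ℝ) = 1 + 1/2 by norm_num, Real.rpow_add hx0, Real.rpow_one,
        ← Real.sqrt_eq_rpow, one_div]
    have hwrw : weight (m + 1) = 1 / (x * (x + 1)) := by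
      unfold weight; rw [hxdef]
    rw [hrw, hwrw, div_mul_eq_mul_div, one_mul, div_le_div_iff₀ (by positivity) (by positivity)]
    have hss : Real.sqrt x * Real.sqrt x = x := Real.mul_self_sqrt hx0.le
    nlinarith [Real.sqrt_nonneg x]

/-- For wide-sense stationary processes `X⁽¹⁾, X⁽²⁾` with means
`μ₁, μ₂` and absolutely summable autocovariance functions `γ₁, γ₂`, the double
series defining the covariance-based dissimilarity measure
`d*(X⁽¹⁾, X⁽²⁾) = ∑_{m,l≥1} w_m w_l (√m·|μ₁ − μ₂| + ‖Γ₁(m) − Γ₂(m)‖_F)`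
converges (is summable), i.e. `d*` is finite. -/
theorem dstar_summable
    {Ω : Type*} [MeasurableSpace Ω] (P : Measure Ω) [IsProbabilityMeasure P]
    (X₁ X₂ : ℕ → Ω → ℝ) (μ₁ μ₂ : ℝ) (γ₁ γ₂ : ℕ → ℝ)
    (hmean₁ : ∀ t : ℕ, (∫ ω, X₁ t ω ∂P) = μ₁)
    (hmean₂ : ∀ t : ℕ, (∫ ω, X₂ t ω ∂P) = μ₂)
    (hcov₁ : ∀ s t : ℕ, (∫ ω, (X₁ s ω - μ₁) * (X₁ t ω - μ₁) ∂P)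
        = γ₁ (((s : ℤ) - (t : ℤ)).natAbs))
    (hcov₂ : ∀ s t : ℕ, (∫ ω, (X₂ s ω - μ₂) * (X₂ t ω - μ₂) ∂P)
        = γ₂ (((s : ℤ) - (t : ℤ)).natAbs))
    (hsum₁ : Summable fun h : ℕ => |γ₁ h|)
    (hsum₂ : Summable fun h : ℕ => |γ₂ h|) :
    Summable (fun ml : ℕ × ℕ => dstarTerm μ₁ μ₂ γ₁ γ₂ (ml.1 + 1) (ml.2 + 1)) := by
  set K : ℝ := (∑' h, |γ₁ h|) + (∑' h, |γ₂ h|) with hKdef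
  have hK0 : 0 ≤ K :=
    add_nonneg (tsum_nonneg fun _ => abs_nonneg _) (tsum_nonneg fun _ => abs_nonneg _)
  set δ : ℕ → ℝ := fun h => γ₁ h - γ₂ h with hδdef
  have hδK : ∀ h, |δ h| ≤ K := by
    intro h
    have h1 : |γ₁ h| ≤ ∑' h, |γ₁ h| := Summable.le_tsum hsum₁ h fun _ _ => abs_nonneg _
    have h2 : |γ₂ h| ≤ ∑' h, |γ₂ h| := Summable.le_tsum hsum₂ h fun _ _ => abs_nonneg _
    calc |δ h| ≤ |γ₁ h| + |γ₂ h| := abs_sub _ _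
    _ ≤ K := add_le_add h1 h2
  have hTK : ∀ m : ℕ, ∑ h ∈ Finset.range m, |δ h| ≤ K := by
    intro m
    calc ∑ h ∈ Finset.range m, |δ h| ≤ ∑ h ∈ Finset.range m, (|γ₁ h| + |γ₂ h|) :=
          Finset.sum_le_sum fun h _ => abs_sub _ _
    _ = ∑ h ∈ Finset.range m, |γ₁ h| + ∑ h ∈ Finset.range m, |γ₂ h| := Finset.sum_add_distrib
    _ ≤ K := add_le_add
        (Summable.sum_le_tsum _ (fun _ _ => abs_nonneg _) hsum₁)
        (Summable.sum_le_tsum _ (fun _ _ => abs_nonneg _) hsum₂)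
  -- Frobenius norm bound
  have hfrob : ∀ m : ℕ,
      frobNorm (toeplitzCov γ₁ m - toeplitzCov γ₂ m) ≤ Real.sqrt 2 * Real.sqrt m * K := by
    intro m
    have hS : ∑ a : Fin m, ∑ b : Fin m,
        (toeplitzCov γ₁ m - toeplitzCov γ₂ m) a b ^ 2 ≤ 2 * m * K ^ 2 := by
      have hEntry : ∀ a b : Fin m,
          (toeplitzCov γ₁ m - toeplitzCov γ₂ m) a b ^ 2
            ≤ K * |δ (((a:ℤ) - (b:ℤ)).natAbs)| := by
        intro a b
        have h0 : (toeplitzCov γ₁ m - toeplitzCov γ₂ m) a b = δ (((a:ℤ) - (b:ℤ)).natAbs) := rfl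
        rw [h0, ← sq_abs, sq]
        exact mul_le_mul_of_nonneg_right (hδK _) (abs_nonneg _)
      calc ∑ a : Fin m, ∑ b : Fin m, (toeplitzCov γ₁ m - toeplitzCov γ₂ m) a b ^ 2
          ≤ ∑ a : Fin m, ∑ b : Fin m, K * |δ (((a:ℤ) - (b:ℤ)).natAbs)| :=
            Finset.sum_le_sum fun a _ => Finset.sum_le_sum fun b _ => hEntry a b
      _ = K * ∑ a : Fin m, ∑ b : Fin m, |δ (((a:ℤ) - (b:ℤ)).natAbs)| := by
            rw [Finset.mul_sum]; congr 1; ext a; rw [Finset.mul_sum]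
      _ ≤ K * ∑ _a : Fin m, 2 * ∑ h ∈ Finset.range m, |δ h| := by
            apply mul_le_mul_of_nonneg_left _ hK0
            exact Finset.sum_le_sum fun a _ => inner_sum_le (fun h => |δ h|)
              (fun _ => abs_nonneg _) a
      _ = K * (m * (2 * ∑ h ∈ Finset.range m, |δ h|)) := by
            rw [Finset.sum_const, Finset.card_univ, Fintype.card_fin, nsmul_eq_mul]
      _ ≤ K * (m * (2 * K)) := by
            apply mul_le_mul_of_nonneg_left _ hK0
            apply mul_le_mul_of_nonneg_left _ (by positivity)
            linarith [hTK m]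
      _ = 2 * m * K ^ 2 := by ring
    calc frobNorm (toeplitzCov γ₁ m - toeplitzCov γ₂ m) ≤ Real.sqrt (2 * m * K ^ 2) :=
          Real.sqrt_le_sqrt hS
    _ = Real.sqrt 2 * Real.sqrt m * K := by
        rw [Real.sqrt_mul (by positivity), Real.sqrt_mul (by norm_num), Real.sqrt_sq hK0]
  set C : ℝ := |μ₁ - μ₂| + Real.sqrt 2 * K with hCdef
  have hC0 : 0 ≤ C := by positivity
  -- main bound
  have hbound : ∀ m l : ℕ, dstarTerm μ₁ μ₂ γ₁ γ₂ m l
      ≤ (weight m * Real.sqrt m * C) * weight l := by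
    intro m l
    unfold dstarTerm
    have h1 : Real.sqrt m * |μ₁ - μ₂| + frobNorm (toeplitzCov γ₁ m - toeplitzCov γ₂ m)
        ≤ Real.sqrt m * C := by
      rw [hCdef, mul_add]
      gcongr
      calc frobNorm (toeplitzCov γ₁ m - toeplitzCov γ₂ m)
          ≤ Real.sqrt 2 * Real.sqrt m * K := hfrob m
      _ = Real.sqrt m * (Real.sqrt 2 * K) := by ring
    calc weight m * weight l *
        (Real.sqrt m * |μ₁ - μ₂| + frobNorm (toeplitzCov γ₁ m - toeplitzCov γ₂ m))
        ≤ weight m * weight l * (Real.sqrt m * C) :=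
          mul_le_mul_of_nonneg_left h1 (mul_nonneg (weight_nonneg m) (weight_nonneg l))
    _ = (weight m * Real.sqrt m * C) * weight l := by ring
  have hterm0 : ∀ m l : ℕ, 0 ≤ dstarTerm μ₁ μ₂ γ₁ γ₂ m l := by
    intro m l
    unfold dstarTerm frobNorm weight
    positivity
  have hψ := psi_summable
  have hψw : Summable (fun l : ℕ => weight (l + 1)) := by
    apply Summable.of_nonneg_of_le (fun l => weight_nonneg _) _ hψ
    intro l
    nth_rewrite 1 [← mul_one (weight (l + 1))]
    apply mul_le_mul_of_nonneg_left _ (weight_nonneg _)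
    have h1 : Real.sqrt 1 ≤ Real.sqrt ((l + 1 : ℕ)) := by
      apply Real.sqrt_le_sqrt
      exact_mod_cast Nat.succ_pos l
    simpa using h1
  have hF : Summable (fun ml : ℕ × ℕ =>
      (weight (ml.1 + 1) * Real.sqrt ((ml.1 + 1 : ℕ)) * C) * weight (ml.2 + 1)) := by
    apply Summable.mul_of_nonneg (hψ.mul_right C) hψw
    · intro m
      exact mul_nonneg (mul_nonneg (weight_nonneg _) (Real.sqrt_nonneg _)) hC0
    · intro l; exact weight_nonneg _
  exact Summable.of_nonneg_of_le (fun ml => hterm0 _ _)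
    (fun ml => hbound (ml.1 + 1) (ml.2 + 1)) hF
end

section
/- (Core of the consistency of the offline clustering algorithm, Algorithm 1.) Let (S, d) be a pseudometric space, let κ ≥ 2, let p₁, …, p_κ ∈ S satisfy d(p_k, p_{k'}) ≥ δ for all k ≠ k' with δ > 0, let x₁, …, x_N ∈ S with N ≥ κ, and let g : {1, …, N} → {1, …, κ} be a surjective assignment with d(x_i, p_{g(i)}) ≤ ε for every i, where 0 < ε < δ/4. Consider the farthest-point initialization: choose (c₁, c₂) to be any pair of indices maximizing d(x_i, x_j) over i < j, and for k = 3, …, κ choose c_k to be any index maximizing i ↦ min_{j=1,…,k−1} d(x_i, x_{c_j}). Then the labels g(c₁), …, g(c_κ) are pairwise distinct, and for every i ∈ {1, …, N} the index k minimizing d(x_i, x_{c_k}) over k ∈ {1, …, κ} is unique and satisfies g(c_k) = g(i); consequently, assigning each point to its nearest center recovers exactly the ground-truth partition {g⁻¹(1), …, g⁻¹(κ)}. -/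
/-- core of the consistency of the offline clustering
algorithm, Algorithm 1: in a pseudometric space, let `p 0, …, p (κ−1)` be
`δ`-separated centers, `x 0, …, x (N−1)` points, and `g` a surjective
ground-truth assignment with `dist (x i) (p (g i)) ≤ ε` where
`0 < ε < δ/4` and `2 ≤ κ ≤ N`.  Suppose the indices `c 0, c 1, …, c (κ−1)` are
chosen by farthest-point initialization: `(c 0, c 1)` maximizes the pairwise
distance, and for `2 ≤ k < κ`, `c k` maximizes the minimal distance to the
previously chosen centers.  Then the ground-truth labels `g (c k)`,
`k < κ`, are pairwise distinct; for every point the nearest-center index is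
unique; and every nearest center carries the ground-truth label of the point,
so nearest-center assignment recovers the ground-truth partition. -/
theorem offline_algorithm_consistent_core
    {S : Type*} [PseudoMetricSpace S] {κ N : ℕ} (δ ε : ℝ)
    (hκ : 2 ≤ κ) (hκN : κ ≤ N)
    (p : Fin κ → S) (x : Fin N → S) (g : Fin N → Fin κ)
    (hδ : 0 < δ)
    (hsep : ∀ k k' : Fin κ, k ≠ k' → δ ≤ dist (p k) (p k'))
    (hg : Function.Surjective g)
    (hassign : ∀ i : Fin N, dist (x i) (p (g i)) ≤ ε)
    (hε : 0 < ε) (hεδ : ε < δ / 4)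
    (c : ℕ → Fin N)
    -- farthest two-point initialization
    (hc01 : ∀ i j : Fin N, dist (x i) (x j) ≤ dist (x (c 0)) (x (c 1)))
    -- each next center is farthest from the previously chosen centers
    (hck : ∀ k : ℕ, 2 ≤ k → k < κ → ∀ i : Fin N,
      (⨅ j : Fin k, dist (x i) (x (c j)))
        ≤ ⨅ j : Fin k, dist (x (c k)) (x (c j))) :
    -- the selected centers carry pairwise distinct ground-truth labels
    (∀ k k' : ℕ, k < κ → k' < κ → g (c k) = g (c k') → k = k') ∧
    -- the nearest-center index of each point is unique
    (∀ i : Fin N, ∃! k : ℕ, k < κ ∧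
      ∀ k' : ℕ, k' < κ → dist (x i) (x (c k)) ≤ dist (x i) (x (c k'))) ∧
    -- and any nearest center has the same ground-truth label as the point
    (∀ i : Fin N, ∀ k : ℕ, k < κ →
      (∀ k' : ℕ, k' < κ → dist (x i) (x (c k)) ≤ dist (x i) (x (c k'))) →
      g (c k) = g i) := by

  have hε2 : 2 * ε < δ - 2 * ε := by linarith
  have hsame : ∀ i j : Fin N, g i = g j → dist (x i) (x j) ≤ 2 * ε := by
    intro i j h
    have h1 := hassign i
    have h2 := hassign j
    have t := dist_triangle_right (x i) (x j) (p (g j))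
    rw [h] at h1
    linarith
  have hdiff : ∀ i j : Fin N, g i ≠ g j → δ - 2 * ε ≤ dist (x i) (x j) := by
    intro i j h
    have h1 := hassign i
    have h2 := hassign j
    have t := dist_triangle4 (p (g i)) (x i) (x j) (p (g j))
    rw [dist_comm (p (g i)) (x i)] at t
    have hs := hsep (g i) (g j) h
    linarith
  have hlt : ∀ k k' : ℕ, k' < k → k < κ → g (c k) ≠ g (c k') := by
    intro k k' hk'k hkκ
    rcases Nat.lt_or_ge k 2 with hk2 | hk2
    · have hk1 : k = 1 := by omega
      have hk'0 : k' = 0 := by omega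
      subst hk1; subst hk'0
      obtain ⟨i0, hi0⟩ := hg ⟨0, by omega⟩
      obtain ⟨i1, hi1⟩ := hg ⟨1, by omega⟩
      have hne : g i0 ≠ g i1 := by
        rw [hi0, hi1]
        simp [Fin.ext_iff]
      have h1 := hdiff i0 i1 hne
      have h2 := hc01 i0 i1
      intro hcontra
      have h3 := hsame (c 0) (c 1) hcontra.symm
      linarith
    · haveI : Nonempty (Fin k) := ⟨⟨0, by omega⟩⟩
      have hbdd : ∀ (y : S), BddBelow (Set.range fun j : Fin k => dist y (x (c j))) :=
        fun y => ⟨0, by rintro r ⟨j, rfl⟩; exact dist_nonneg⟩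
      set F : Finset (Fin κ) := Finset.image (fun j : Fin k => g (c j)) Finset.univ with hF
      have hcard : F.card < κ :=
        lt_of_le_of_lt (le_trans Finset.card_image_le (by simp)) hkκ
      have hex : ∃ ℓ : Fin κ, ℓ ∉ F := by
        by_contra h
        push_neg at h
        have heq : F = Finset.univ := Finset.eq_univ_iff_forall.mpr h
        rw [heq, Finset.card_univ, Fintype.card_fin] at hcard
        omega
      obtain ⟨ℓ, hℓ⟩ := hex
      obtain ⟨i, hi⟩ := hg ℓ
      have hfar : ∀ j : Fin k, δ - 2 * ε ≤ dist (x i) (x (c j)) := by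
        intro j
        apply hdiff
        rw [hi]
        intro h
        exact hℓ (hF ▸ Finset.mem_image.mpr ⟨j, Finset.mem_univ j, h.symm⟩)
      have h1 : δ - 2 * ε ≤ ⨅ j : Fin k, dist (x i) (x (c j)) := le_ciInf hfar
      have h2 := hck k hk2 hkκ i
      have h3 : (⨅ j : Fin k, dist (x (c k)) (x (c j)))
          ≤ dist (x (c k)) (x (c (⟨k', hk'k⟩ : Fin k))) :=
        ciInf_le (hbdd (x (c k))) (⟨k', hk'k⟩ : Fin k)
      intro hcontra
      have h4 := hsame (c k) (c k') hcontra
      simp only [Fin.val_mk] at h3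
      linarith
  have hne' : ∀ k k' : ℕ, k < κ → k' < κ → k ≠ k' → g (c k) ≠ g (c k') := by
    intro k k' hk hk' hkk'
    rcases Nat.lt_or_ge k k' with h | h
    · exact (hlt k' k h hk').symm
    · exact hlt k k' (by omega) hk
  have con1 : ∀ k k' : ℕ, k < κ → k' < κ → g (c k) = g (c k') → k = k' := by
    intro k k' hk hk' heq
    by_contra h
    exact hne' k k' hk hk' h heq
  have hinj : Function.Injective (fun k : Fin κ => g (c k)) := by
    intro a b h
    exact Fin.ext (con1 a b a.isLt b.isLt h)
  have hsurj : Function.Surjective (fun k : Fin κ => g (c k)) :=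
    Finite.injective_iff_surjective.mp hinj
  have key : ∀ i : Fin N, ∃ k₀ : ℕ, k₀ < κ ∧ g (c k₀) = g i := by
    intro i
    obtain ⟨k₀, hk₀⟩ := hsurj (g i)
    exact ⟨k₀, k₀.isLt, hk₀⟩
  have con3 : ∀ i : Fin N, ∀ k : ℕ, k < κ →
      (∀ k' : ℕ, k' < κ → dist (x i) (x (c k)) ≤ dist (x i) (x (c k'))) →
      g (c k) = g i := by
    intro i k hk hmin
    obtain ⟨k₀, hk₀κ, hk₀⟩ := key i
    by_contra h
    have h1 := hmin k₀ hk₀κ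
    have h2 := hsame i (c k₀) hk₀.symm
    have h3 := hdiff i (c k) (fun hh => h hh.symm)
    linarith
  refine ⟨con1, ?_, con3⟩
  intro i
  obtain ⟨k₀, hk₀κ, hk₀⟩ := key i
  refine ⟨k₀, ⟨hk₀κ, ?_⟩, ?_⟩
  · intro k' hk'
    by_cases h : g (c k') = g i
    · have hkk : k' = k₀ := con1 k' k₀ hk' hk₀κ (h.trans hk₀.symm)
      rw [hkk]
    · have h2 := hsame i (c k₀) hk₀.symm
      have h3 := hdiff i (c k') (fun hh => h hh.symm)
      linarith
  · rintro k ⟨hkκ', hmin⟩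
    exact con1 k k₀ hkκ' hk₀κ ((con3 i k hkκ' hmin).trans hk₀.symm)
end
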